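/- Let G be a connected claw-free cubic graph with bridge set B(G), and let H be a connected component of G - B(G). Then H has no vertex of degree at most 1 in H; in particular, if H has more than one vertex, then every vertex of H has degree at least 2 in H. -/

import Mathlib

open SimpleGraph

/-- A graph is claw-free if it has no induced subgraph isomorphic to `K_{1,3}`. -/
def IsClawFree {V : Type*} (G : SimpleGraph V) : Prop :=
  ¬ ∃ v a b c : V, a ≠ b ∧ a ≠ c ∧ b ≠ c ∧
    G.Adj v a ∧ G.Adj v b ∧ G.Adj v c ∧ ¬ G.Adj a b ∧ ¬ G.Adj a c ∧ ¬ G.Adj b c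

/-- `G - B(G)`: the graph obtained from `G` by deleting all of its bridges. -/
def bridgeFree {V : Type*} (G : SimpleGraph V) : SimpleGraph V :=
  G.deleteEdges {e | G.IsBridge e}

/-- An edge of a triangle is never a bridge. -/
lemma not_bridge_of_triangle {V : Type*} (G : SimpleGraph V) {v a b : V}
    (hva : G.Adj v a) (hvb : G.Adj v b) (hba : G.Adj b a) :
    ¬ G.IsBridge s(v, a) := by
  rw [SimpleGraph.isBridge_iff]
  intro hnr
  apply hnr
  have h1 : (G \ fromEdgeSet {s(v, a)}).Adj v b := by
    rw [SimpleGraph.sdiff_adj, SimpleGraph.fromEdgeSet_adj]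
    refine ⟨hvb, ?_⟩
    rintro ⟨hmem, -⟩
    rw [Set.mem_singleton_iff, Sym2.congr_right] at hmem
    exact hba.ne hmem
  have h2 : (G \ fromEdgeSet {s(v, a)}).Adj b a := by
    rw [SimpleGraph.sdiff_adj, SimpleGraph.fromEdgeSet_adj]
    refine ⟨hba, ?_⟩
    rintro ⟨hmem, -⟩
    rw [Set.mem_singleton_iff, Sym2.congr_left] at hmem
    exact hvb.ne hmem.symm
  exact h1.reachable.trans h2.reachable

/-- In a connected claw-free cubic graph `G`, no component of `G - B(G)` has a vertex of
degree at most `1` within that component: every vertex has at least two neighbors in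
`G - B(G)` (all of which lie in its component). -/
theorem component_min_degree_two {V : Type*} [Fintype V] [DecidableEq V]
    (G : SimpleGraph V) [DecidableRel G.Adj]
    (hconn : G.Connected) (hcubic : ∀ v : V, G.degree v = 3) (hclawfree : IsClawFree G) :
    ∀ v : V, 2 ≤ ((bridgeFree G).neighborSet v).ncard := by
  intro v
  classical
  have hdeg : (G.neighborFinset v).card = 3 := hcubic v
  obtain ⟨a, b, c, hab, hac, hbc, hN⟩ := Finset.card_eq_three.mp hdeg
  have ha : G.Adj v a := by
    rw [← SimpleGraph.mem_neighborFinset, hN]; simp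
  have hb : G.Adj v b := by
    rw [← SimpleGraph.mem_neighborFinset, hN]; simp
  have hc : G.Adj v c := by
    rw [← SimpleGraph.mem_neighborFinset, hN]; simp
  -- no two of the three edges at `v` can both be bridges
  have key : ∀ x y z : V, x ≠ y → x ≠ z → y ≠ z →
      G.Adj v x → G.Adj v y → G.Adj v z →
      G.IsBridge s(v, x) → G.IsBridge s(v, y) → False := by
    intro x y z hxy hxz hyz hvx hvy hvz hbx hby
    exact hclawfree ⟨v, x, y, z, hxy, hxz, hyz, hvx, hvy, hvz,
      fun h => not_bridge_of_triangle G hvx hvy h.symm hbx,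
      fun h => not_bridge_of_triangle G hvx hvz h.symm hbx,
      fun h => not_bridge_of_triangle G hvy hvz h.symm hby⟩
  have hmem : ∀ w, w ∈ (bridgeFree G).neighborSet v ↔
      G.Adj v w ∧ ¬ G.IsBridge s(v, w) := by
    intro w
    simp [bridgeFree, SimpleGraph.deleteEdges_adj, SimpleGraph.mem_neighborSet]
  obtain ⟨x, y, hx, hy, hxy⟩ :
      ∃ x y, x ∈ (bridgeFree G).neighborSet v ∧ y ∈ (bridgeFree G).neighborSet v ∧ x ≠ y := by
    by_cases hBa : G.IsBridge s(v, a)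
    · refine ⟨b, c, ?_, ?_, hbc⟩
      · exact (hmem b).mpr ⟨hb, fun hBb => key a b c hab hac hbc ha hb hc hBa hBb⟩
      · exact (hmem c).mpr ⟨hc, fun hBc => key a c b hac hab hbc.symm ha hc hb hBa hBc⟩
    · by_cases hBb : G.IsBridge s(v, b)
      · refine ⟨a, c, ?_, ?_, hac⟩
        · exact (hmem a).mpr ⟨ha, hBa⟩
        · exact (hmem c).mpr ⟨hc, fun hBc => key b c a hbc hab.symm hac.symm hb hc ha hBb hBc⟩
      · exact ⟨a, b, (hmem a).mpr ⟨ha, hBa⟩, (hmem b).mpr ⟨hb, hBb⟩, hab⟩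
  have : 1 < ((bridgeFree G).neighborSet v).ncard :=
    (Set.one_lt_ncard_iff (Set.toFinite _)).mpr ⟨x, y, hx, hy, hxy⟩
  omega
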